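/- Liouville theorem: Assume u ∈ 𝓛_s(ℝ^N) ∩ C^{1,1}_loc(ℝ^N) is bounded and satisfies (−Δ + m²)^s u(x) = f(u(x)) for all x ∈ ℝ^N, where f : ℝ → ℝ satisfies sup { (f(t₁) − f(t₂))/(t₁ − t₂) : inf u ≤ t₂ < t₁ ≤ sup u } < m^{2s}. Then u is identically equal to a constant C, and this constant satisfies f(C) = m^{2s} C. -/

import Mathlib

open MeasureTheory Filter Topology Metric Set
open scoped RealInnerProductSpace

noncomputable section

/-- Points of `ℝ^N`. -/
abbrev Pt (N : ℕ) := EuclideanSpace ℝ (Fin N)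

/-- The modified Bessel function of the second kind
`K_ν(r) = ∫_0^∞ e^{-r cosh t} cosh (ν t) dt`. -/
noncomputable def besselK (ν r : ℝ) : ℝ :=
  ∫ t in Set.Ioi (0:ℝ), Real.exp (-(r * Real.cosh t)) * Real.cosh (ν * t)

/-- The normalizing constant `c_{N,s}`. -/
noncomputable def cNs (N : ℕ) (s : ℝ) : ℝ :=
  2 ^ (1 - (N : ℝ)/2 + s) * Real.pi ^ (-(N : ℝ)/2) * (s * (1 - s) / Real.Gamma (2 - s))

/-- Pointwise value of the pseudo-relativistic Schrödinger operator `(-Δ + m²)^s u (x)`,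
defined through the principal value limit (`limUnder` equals the limit whenever it exists). -/
noncomputable def psOp (N : ℕ) (s m : ℝ) (u : Pt N → ℝ) (x : Pt N) : ℝ :=
  cNs N s * m ^ ((N : ℝ)/2 + s) *
    limUnder (𝓝[>] (0:ℝ)) (fun ε : ℝ =>
      ∫ y in {y : Pt N | ε < dist x y},
        (u x - u y) * (dist x y) ^ (-((N : ℝ)/2 + s)) *
          besselK ((N : ℝ)/2 + s) (m * dist x y)) +
  m ^ (2 * s) * u x

/-- The weighted integrability class `𝓛_s(ℝ^N)`. -/
def memLs (N : ℕ) (s : ℝ) (u : Pt N → ℝ) : Prop :=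
  AEMeasurable u ∧
    (∫⁻ x : Pt N, ENNReal.ofReal
      (Real.exp (-‖x‖) * |u x| / (1 + ‖x‖ ^ (((N : ℝ) + 1)/2 + s)))) < ⊤

/-- `u` is `C^{1,1}` in a neighborhood of `x₀`. -/
def C11At (N : ℕ) (u : Pt N → ℝ) (x₀ : Pt N) : Prop :=
  ∃ ε > 0, DifferentiableOn ℝ u (ball x₀ ε) ∧
    ∃ K : NNReal, LipschitzOnWith K (fderiv ℝ u) (ball x₀ ε)

/-- `u ∈ C^{1,1}_loc(Ω)`: near every point of `Ω`, `u` is differentiable with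
Lipschitz gradient. -/
def C11loc (N : ℕ) (Ω : Set (Pt N)) (u : Pt N → ℝ) : Prop :=
  ∀ x ∈ Ω, ∃ ε > 0, ball x ε ⊆ Ω ∧ DifferentiableOn ℝ u (ball x ε) ∧
    ∃ K : NNReal, LipschitzOnWith K (fderiv ℝ u) (ball x ε)

/-- The open half-space `Σ = {x : ⟪a,x⟫ < b}` on one side of the hyperplane
`T = {x : ⟪a,x⟫ = b}` (`a` a unit vector). -/
def halfSpace (N : ℕ) (a : Pt N) (b : ℝ) : Set (Pt N) := {x | (inner ℝ a x : ℝ) < b}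

/-- Reflection `x̃` of `x` across the hyperplane `T = {x : ⟪a,x⟫ = b}` (`a` a unit vector). -/
def reflHyp (N : ℕ) (a : Pt N) (b : ℝ) (x : Pt N) : Pt N :=
  x + (2 * (b - (inner ℝ a x : ℝ))) • a

section Aux

lemma rpow_mul_exp_neg_le {a X : ℝ} (ha : 0 < a) (hX : 0 < X) :
    X ^ a * Real.exp (-X) ≤ a ^ a * Real.exp (-a) := by
  rw [Real.rpow_def_of_pos hX, Real.rpow_def_of_pos ha, ← Real.exp_add, ← Real.exp_add]
  apply Real.exp_le_exp.2
  have h := Real.log_le_sub_one_of_pos (x := X / a) (by positivity)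
  rw [Real.log_div hX.ne' ha.ne'] at h
  have h2 := mul_le_mul_of_nonneg_left h ha.le
  have hXa : a * (X / a - 1) = X - a := by field_simp
  nlinarith

lemma besselK_integrand_nonneg (ν r t : ℝ) :
    0 ≤ Real.exp (-(r * Real.cosh t)) * Real.cosh (ν * t) := by
  positivity

lemma besselK_integrand_le {ν r : ℝ} (hν : 0 ≤ ν) (hr : 0 < r) {t : ℝ} (ht : 0 ≤ t) :
    Real.exp (-(r * Real.cosh t)) * Real.cosh (ν * t) ≤
      ((ν+1) ^ (ν+1) * Real.exp (-(ν+1)) * (2/r) ^ (ν+1)) * Real.exp (-t) := by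
  have h1 : Real.cosh (ν * t) ≤ Real.exp (ν * t) := by
    rw [Real.cosh_eq]
    have : Real.exp (-(ν*t)) ≤ Real.exp (ν*t) := by
      apply Real.exp_le_exp.2; nlinarith [mul_nonneg hν ht]
    linarith
  have hc : Real.exp t / 2 ≤ Real.cosh t := by
    rw [Real.cosh_eq]
    have := Real.exp_pos (-t); linarith
  have h2 : Real.exp (-(r * Real.cosh t)) ≤ Real.exp (-((r/2) * Real.exp t)) := by
    apply Real.exp_le_exp.2; rw [neg_le_neg_iff]
    calc r/2 * Real.exp t = r * (Real.exp t / 2) := by ring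
    _ ≤ r * Real.cosh t := by
        apply mul_le_mul_of_nonneg_left hc hr.le
  have key : Real.exp (-((r/2) * Real.exp t)) * Real.exp (ν * t) ≤
      ((ν+1) ^ (ν+1) * Real.exp (-(ν+1)) * (2/r) ^ (ν+1)) * Real.exp (-t) := by
    have hY : 0 < (r/2) * Real.exp t := by positivity
    have hM := rpow_mul_exp_neg_le (a := ν+1) (X := (r/2) * Real.exp t) (by linarith) hY
    -- ((r/2) e^t)^(ν+1) exp(-((r/2)e^t)) ≤ (ν+1)^(ν+1) exp(-(ν+1))
    have hpow : ((r/2) * Real.exp t) ^ (ν+1) = (r/2) ^ (ν+1) * (Real.exp t) ^ (ν+1) :=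
      Real.mul_rpow (by positivity) (Real.exp_pos t).le
    have hexp : (Real.exp t) ^ (ν+1) = Real.exp ((ν+1) * t) := by
      rw [Real.rpow_def_of_pos (Real.exp_pos t), Real.log_exp, mul_comm]
    rw [hpow, hexp] at hM
    have hr2 : ((2:ℝ)/r) ^ (ν+1) * (r/2) ^ (ν+1) = 1 := by
      rw [← Real.mul_rpow (by positivity) (by positivity)]
      rw [show (2:ℝ)/r * (r/2) = 1 by field_simp]
      exact Real.one_rpow _
    have e1 : Real.exp ((ν+1) * t) = Real.exp (ν * t) * Real.exp t := by
      rw [← Real.exp_add]; ring_nf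
    have e2 : Real.exp (ν * t) = Real.exp ((ν+1) * t) * Real.exp (-t) := by
      rw [← Real.exp_add]; ring_nf
    have h3 : 0 < (r/2) ^ (ν+1) := Real.rpow_pos_of_pos (by positivity) _
    -- multiply hM by (2/r)^(ν+1) * exp(-t)
    have h4 := mul_le_mul_of_nonneg_right hM
      (le_of_lt (mul_pos (Real.rpow_pos_of_pos (show (0:ℝ) < 2/r by positivity) (ν+1)) (Real.exp_pos (-t))))
    calc Real.exp (-(r / 2 * Real.exp t)) * Real.exp (ν * t)
        = ((r/2) ^ (ν+1) * Real.exp ((ν+1)*t) * Real.exp (-(r / 2 * Real.exp t))) * (((2:ℝ)/r) ^ (ν+1) * Real.exp (-t)) := by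
          have expand : ((r/2) ^ (ν+1) * Real.exp ((ν+1)*t) * Real.exp (-(r/2*Real.exp t))) * (((2:ℝ)/r) ^ (ν+1) * Real.exp (-t))
              = (((2:ℝ)/r) ^ (ν+1) * (r/2) ^ (ν+1)) * ((Real.exp ((ν+1)*t) * Real.exp (-t)) * Real.exp (-(r/2*Real.exp t))) := by ring
          rw [expand, hr2, one_mul, ← Real.exp_add, ← Real.exp_add, ← Real.exp_add]
          ring_nf
      _ ≤ ((ν + 1) ^ (ν + 1) * Real.exp (-(ν + 1))) * (((2:ℝ)/r) ^ (ν+1) * Real.exp (-t)) := h4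
      _ = _ := by ring
  calc Real.exp (-(r * Real.cosh t)) * Real.cosh (ν * t)
      ≤ Real.exp (-((r/2) * Real.exp t)) * Real.exp (ν * t) := by
        apply mul_le_mul h2 h1 (by positivity) (Real.exp_pos _).le
    _ ≤ _ := key

lemma integrableOn_besselK_integrand {ν r : ℝ} (hν : 0 ≤ ν) (hr : 0 < r) :
    IntegrableOn (fun t => Real.exp (-(r * Real.cosh t)) * Real.cosh (ν * t)) (Set.Ioi 0) := by
  have hint : IntegrableOn
      (fun t => ((ν+1) ^ (ν+1) * Real.exp (-(ν+1)) * (2/r) ^ (ν+1)) * Real.exp (-(1:ℝ) * t))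
      (Set.Ioi 0) := (exp_neg_integrableOn_Ioi 0 one_pos).const_mul _
  apply hint.mono'
  · exact ((Real.continuous_exp.comp (by fun_prop)).mul
      (Real.continuous_cosh.comp (by fun_prop))).aestronglyMeasurable
  · filter_upwards [ae_restrict_mem measurableSet_Ioi] with t ht
    rw [Real.norm_eq_abs, abs_of_nonneg (besselK_integrand_nonneg _ _ _)]
    simpa [neg_one_mul] using besselK_integrand_le hν hr (le_of_lt ht)

lemma besselK_nonneg (ν r : ℝ) : 0 ≤ besselK ν r :=
  MeasureTheory.setIntegral_nonneg measurableSet_Ioi fun t _ => besselK_integrand_nonneg ν r t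

lemma besselK_antitone {ν r₁ r₂ : ℝ} (hν : 0 ≤ ν) (h1 : 0 < r₁) (h12 : r₁ ≤ r₂) :
    besselK ν r₂ ≤ besselK ν r₁ := by
  apply MeasureTheory.setIntegral_mono_on
    (integrableOn_besselK_integrand hν (lt_of_lt_of_le h1 h12))
    (integrableOn_besselK_integrand hν h1) measurableSet_Ioi
  intro t _
  have hc := Real.cosh_pos t
  have : Real.exp (-(r₂ * Real.cosh t)) ≤ Real.exp (-(r₁ * Real.cosh t)) := by
    apply Real.exp_le_exp.2; nlinarith
  exact mul_le_mul_of_nonneg_right this (le_of_lt (Real.cosh_pos _))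

lemma cosh_mul_le_exp {ν t : ℝ} (hν : 0 ≤ ν) (ht : 0 ≤ t) :
    Real.cosh (ν * t) ≤ Real.exp (ν * t) := by
  rw [Real.cosh_eq]
  have : Real.exp (-(ν*t)) ≤ Real.exp (ν*t) := by
    apply Real.exp_le_exp.2; nlinarith
  linarith

lemma besselK_le_exp {ν c r : ℝ} (hν : 0 ≤ ν) (hc : 0 < c) (hr : c ≤ r) :
    besselK ν r ≤ Real.exp (-(r/2)) * besselK ν (c/2) := by
  have hr0 : 0 < r := lt_of_lt_of_le hc hr
  have step : ∀ t ∈ Set.Ioi (0:ℝ),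
      Real.exp (-(r * Real.cosh t)) * Real.cosh (ν * t) ≤
      Real.exp (-(r/2)) * (Real.exp (-(c/2 * Real.cosh t)) * Real.cosh (ν * t)) := by
    intro t _
    have h1 := Real.one_le_cosh t
    have : Real.exp (-(r * Real.cosh t)) ≤ Real.exp (-(r/2)) * Real.exp (-(c/2 * Real.cosh t)) := by
      rw [← Real.exp_add]
      apply Real.exp_le_exp.2
      nlinarith
    calc Real.exp (-(r * Real.cosh t)) * Real.cosh (ν * t)
        ≤ (Real.exp (-(r/2)) * Real.exp (-(c/2 * Real.cosh t))) * Real.cosh (ν * t) :=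
          mul_le_mul_of_nonneg_right this (le_of_lt (Real.cosh_pos _))
      _ = Real.exp (-(r/2)) * (Real.exp (-(c/2 * Real.cosh t)) * Real.cosh (ν * t)) := by ring
  calc besselK ν r ≤ ∫ t in Set.Ioi (0:ℝ),
        Real.exp (-(r/2)) * (Real.exp (-(c/2 * Real.cosh t)) * Real.cosh (ν * t)) := by
        apply MeasureTheory.setIntegral_mono_on
          (integrableOn_besselK_integrand hν hr0)
          ((integrableOn_besselK_integrand hν (by linarith)).const_mul _)
          measurableSet_Ioi step
    _ = Real.exp (-(r/2)) * besselK ν (c/2) := by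
        rw [besselK, ← MeasureTheory.integral_const_mul]

lemma measurable_besselK (ν : ℝ) : Measurable (besselK ν) := by
  have hcont : Continuous fun p : ℝ × ℝ =>
      Real.exp (-(p.1 * Real.cosh p.2)) * Real.cosh (ν * p.2) := by fun_prop
  exact (MeasureTheory.StronglyMeasurable.integral_prod_right'
    (ν := volume.restrict (Set.Ioi 0)) hcont.stronglyMeasurable).measurable

lemma besselK_le_rpow {ν γ : ℝ} (hν : 0 ≤ ν) (hγ : 0 < γ) :
    ∃ C : ℝ, 0 ≤ C ∧ ∀ r : ℝ, 0 < r → besselK ν r ≤ C * r ^ (-(ν+γ)) := by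
  set a := ν + γ with ha
  have ha0 : 0 < a := by positivity
  set M := a ^ a * Real.exp (-a) with hM
  have hM0 : 0 ≤ M := by positivity
  set E := ∫ t in Set.Ioi (0:ℝ), Real.exp (-γ * t) with hE
  have hE0 : 0 ≤ E :=
    MeasureTheory.setIntegral_nonneg measurableSet_Ioi fun t _ => (Real.exp_pos _).le
  refine ⟨M * 2^ν * 2^γ * E, by positivity, fun r hr => ?_⟩
  have key : ∀ t ∈ Set.Ioi (0:ℝ),
      Real.exp (-(r * Real.cosh t)) * Real.cosh (ν * t) ≤
      (M * 2^ν * 2^γ * r ^ (-a)) * Real.exp (-γ * t) := by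
    intro t ht
    have ht0 : (0:ℝ) ≤ t := le_of_lt ht
    have hcosh := Real.cosh_pos t
    have hec : Real.exp t ≤ 2 * Real.cosh t := by
      rw [Real.cosh_eq]; have := (Real.exp_pos (-t)).le; linarith
    have h1 : Real.cosh (ν*t) ≤ (2 * Real.cosh t) ^ ν := by
      calc Real.cosh (ν*t) ≤ Real.exp (ν*t) := cosh_mul_le_exp hν ht0
        _ = (Real.exp t) ^ ν := by
            rw [Real.rpow_def_of_pos (Real.exp_pos t), Real.log_exp, mul_comm]
        _ ≤ (2 * Real.cosh t) ^ ν := Real.rpow_le_rpow (Real.exp_pos t).le hec hν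
    have h2 : Real.exp (-(r * Real.cosh t)) ≤ M * (r * Real.cosh t) ^ (-a) := by
      have hX : 0 < r * Real.cosh t := by positivity
      have hb := rpow_mul_exp_neg_le ha0 hX
      calc Real.exp (-(r * Real.cosh t))
          = (r*Real.cosh t) ^ (-a) * ((r*Real.cosh t) ^ a * Real.exp (-(r*Real.cosh t))) := by
            rw [← mul_assoc, ← Real.rpow_add hX]; simp
        _ ≤ (r*Real.cosh t) ^ (-a) * M :=
            mul_le_mul_of_nonneg_left hb (Real.rpow_nonneg hX.le _)
        _ = M * (r * Real.cosh t) ^ (-a) := mul_comm _ _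
    have h3 : (r * Real.cosh t) ^ (-a) * (2 * Real.cosh t) ^ ν
        = 2^ν * r ^ (-a) * (Real.cosh t) ^ (-γ) := by
      rw [Real.mul_rpow hr.le hcosh.le, Real.mul_rpow (by norm_num) hcosh.le,
        show ∀ A B C D : ℝ, A * B * (C * D) = C * A * (B * D) from fun A B C D => by ring,
        ← Real.rpow_add hcosh]
      norm_num [ha]
    have h4 : (Real.cosh t) ^ (-γ) ≤ 2^γ * Real.exp (-γ * t) := by
      have hh : (Real.exp t / 2) ^ (-γ) = 2^γ * Real.exp (-γ*t) := by
        rw [Real.div_rpow (Real.exp_pos t).le (by norm_num),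
          Real.rpow_def_of_pos (Real.exp_pos t), Real.log_exp,
          Real.rpow_neg (by norm_num : (0:ℝ) ≤ 2)]
        rw [div_inv_eq_mul, mul_comm]
        congr 1
        ring
      calc (Real.cosh t) ^ (-γ) ≤ (Real.exp t / 2) ^ (-γ) :=
            Real.rpow_le_rpow_of_nonpos (by positivity) (by linarith) (by linarith)
        _ = 2^γ * Real.exp (-γ*t) := hh
    calc Real.exp (-(r * Real.cosh t)) * Real.cosh (ν * t)
        ≤ (M * (r * Real.cosh t) ^ (-a)) * (2 * Real.cosh t) ^ ν := by
          apply mul_le_mul h2 h1 (le_of_lt (Real.cosh_pos _)) (by positivity)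
      _ = (M * 2^ν * r ^ (-a)) * (Real.cosh t) ^ (-γ) := by rw [mul_assoc M, h3]; ring
      _ ≤ (M * 2^ν * r ^ (-a)) * (2^γ * Real.exp (-γ * t)) := by
          apply mul_le_mul_of_nonneg_left h4 (by positivity)
      _ = (M * 2^ν * 2^γ * r ^ (-a)) * Real.exp (-γ * t) := by ring
  calc besselK ν r ≤ ∫ t in Set.Ioi (0:ℝ), (M * 2^ν * 2^γ * r ^ (-a)) * Real.exp (-γ * t) := by
        apply MeasureTheory.setIntegral_mono_on
          (integrableOn_besselK_integrand hν hr)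
          ((exp_neg_integrableOn_Ioi 0 hγ).const_mul _) measurableSet_Ioi key
    _ = M * 2^ν * 2^γ * E * r ^ (-a) := by
        rw [MeasureTheory.integral_const_mul]; ring

lemma integrableOn_rpow_norm_ball {N : ℕ} (hN : 1 ≤ N) {t : ℝ} (ht : -(N:ℝ) < t) :
    IntegrableOn (fun z : Pt N => ‖z‖ ^ t) (ball (0:Pt N) 1) := by
  haveI : Nontrivial (Pt N) :=
    Module.nontrivial_of_finrank_pos (R := ℝ) (by rw [finrank_euclideanSpace, Fintype.card_fin]; omega)
  have hmeas : Measurable (fun z : Pt N => ‖z‖ ^ t) := by fun_prop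
  rcases le_or_gt 0 t with h0 | h0
  · apply Measure.integrableOn_of_bounded (M := 1) measure_ball_lt_top.ne
      hmeas.aestronglyMeasurable
    filter_upwards [ae_restrict_mem measurableSet_ball] with z hz
    rw [Real.norm_eq_abs, abs_of_nonneg (Real.rpow_nonneg (norm_nonneg z) t)]
    exact Real.rpow_le_one (norm_nonneg z) (le_of_lt (mem_ball_zero_iff.1 hz)) h0
  · have ht0 : t ≠ 0 := ne_of_lt h0
    refine ⟨hmeas.aestronglyMeasurable.restrict, ?_⟩
    rw [hasFiniteIntegral_iff_norm]
    have hnn : ∀ z : Pt N, (0:ℝ) ≤ ‖z‖ ^ t := fun z => Real.rpow_nonneg (norm_nonneg z) t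
    have heq : ∀ z : Pt N, ENNReal.ofReal ‖(‖z‖ ^ t)‖ = ENNReal.ofReal (‖z‖ ^ t) := by
      intro z; rw [Real.norm_eq_abs, abs_of_nonneg (hnn z)]
    simp_rw [heq]
    rw [lintegral_eq_lintegral_meas_le _ (Eventually.of_forall hnn) hmeas.aemeasurable.restrict]
    set μR := volume.restrict (ball (0:Pt N) 1)
    have key : ∀ lam : ℝ, 1 < lam →
        μR {a : Pt N | lam ≤ ‖a‖ ^ t} ≤
          ENNReal.ofReal (lam ^ (t⁻¹ * N)) * volume (ball (0:Pt N) 1) := by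
      intro lam hlam
      have hlam0 : (0:ℝ) < lam := by linarith
      have hsub : {a : Pt N | lam ≤ ‖a‖ ^ t} ⊆ closedBall 0 (lam ^ t⁻¹) := by
        intro a ha
        simp only [mem_setOf_eq] at ha
        rcases eq_or_ne a 0 with rfl | ha0
        · simp [Real.zero_rpow ht0] at ha; linarith
        · have hna : 0 < ‖a‖ := norm_pos_iff.2 ha0
          rw [mem_closedBall_zero_iff]
          exact (Real.le_rpow_inv_iff_of_neg hna hlam0 h0).2 ha
      calc μR {a : Pt N | lam ≤ ‖a‖ ^ t} ≤ volume (closedBall (0:Pt N) (lam ^ t⁻¹)) := by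
            apply le_trans (Measure.restrict_le_self _)
            exact measure_mono hsub
        _ = ENNReal.ofReal ((lam ^ t⁻¹) ^ Module.finrank ℝ (Pt N)) * volume (ball (0:Pt N) 1) :=
            Measure.addHaar_closedBall _ _ (Real.rpow_nonneg hlam0.le _)
        _ = ENNReal.ofReal (lam ^ (t⁻¹ * N)) * volume (ball (0:Pt N) 1) := by
            rw [← Real.rpow_natCast (lam ^ t⁻¹) _, ← Real.rpow_mul hlam0.le,
              finrank_euclideanSpace, Fintype.card_fin]
    calc ∫⁻ lam in Ioi (0:ℝ), μR {a : Pt N | lam ≤ ‖a‖ ^ t}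
        ≤ ∫⁻ lam in Ioc (0:ℝ) 1 ∪ Ioi 1, μR {a : Pt N | lam ≤ ‖a‖ ^ t} :=
          lintegral_mono_set Ioi_subset_Ioc_union_Ioi
      _ ≤ (∫⁻ lam in Ioc (0:ℝ) 1, μR {a : Pt N | lam ≤ ‖a‖ ^ t})
          + ∫⁻ lam in Ioi (1:ℝ), μR {a : Pt N | lam ≤ ‖a‖ ^ t} := lintegral_union_le _ _ _
      _ < ⊤ := by
          apply ENNReal.add_lt_top.2
          constructor
          · calc (∫⁻ lam in Ioc (0:ℝ) 1, μR {a : Pt N | lam ≤ ‖a‖ ^ t})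
                ≤ ∫⁻ _ in Ioc (0:ℝ) 1, volume (ball (0:Pt N) 1) := by
                  apply lintegral_mono
                  intro lam
                  calc μR _ ≤ μR univ := measure_mono (subset_univ _)
                    _ = volume (ball (0:Pt N) 1) := by simp [μR]
              _ < ⊤ := by
                  rw [setLIntegral_const]
                  apply ENNReal.mul_lt_top measure_ball_lt_top
                  simp [Real.volume_Ioc]
          · calc (∫⁻ lam in Ioi (1:ℝ), μR {a : Pt N | lam ≤ ‖a‖ ^ t})
                ≤ ∫⁻ lam in Ioi (1:ℝ),
                    ENNReal.ofReal (lam ^ (t⁻¹ * N)) * volume (ball (0:Pt N) 1) := by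
                  apply setLIntegral_mono' measurableSet_Ioi
                  intro lam hlam
                  exact key lam hlam
              _ = (∫⁻ lam in Ioi (1:ℝ), ENNReal.ofReal (lam ^ (t⁻¹ * N)))
                    * volume (ball (0:Pt N) 1) := lintegral_mul_const' _ _ measure_ball_lt_top.ne
              _ < ⊤ := by
                  apply ENNReal.mul_lt_top _ measure_ball_lt_top
                  apply IntegrableOn.setLIntegral_lt_top
                  apply integrableOn_Ioi_rpow_of_lt _ one_pos
                  rw [mul_comm, ← div_eq_mul_inv]
                  rw [div_lt_iff_of_neg h0]
                  linarith

noncomputable def ker (N : ℕ) (s m : ℝ) (z : Pt N) : ℝ :=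
  ‖z‖ ^ (-((N:ℝ)/2+s)) * besselK ((N:ℝ)/2+s) (m*‖z‖)

section kersec

variable {N : ℕ} {s m : ℝ}

lemma nu_pos (hN : 1 ≤ N) (hs : s ∈ Set.Ioo (0:ℝ) 1) : 0 < (N:ℝ)/2+s := by
  have : (0:ℝ) ≤ N := Nat.cast_nonneg N
  have := hs.1; positivity

lemma ker_nonneg (z : Pt N) : 0 ≤ ker N s m z :=
  mul_nonneg (Real.rpow_nonneg (norm_nonneg z) _) (besselK_nonneg _ _)

lemma measurable_ker : Measurable (ker N s m) := by
  apply Measurable.mul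
  · fun_prop
  · exact (measurable_besselK _).comp (by fun_prop)

lemma ker_integrableOn_annulus (hN : 1 ≤ N) (hs : s ∈ Set.Ioo (0:ℝ) 1) (hm : 0 < m)
    {ε : ℝ} (hε : 0 < ε) :
    IntegrableOn (ker N s m) {z : Pt N | ε ≤ ‖z‖ ∧ ‖z‖ ≤ 1} := by
  have hν := nu_pos hN hs
  have hsub : {z : Pt N | ε ≤ ‖z‖ ∧ ‖z‖ ≤ 1} ⊆ closedBall 0 1 := by
    intro z hz; rw [mem_closedBall_zero_iff]; exact hz.2
  apply Measure.integrableOn_of_bounded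
    (M := ε ^ (-((N:ℝ)/2+s)) * besselK ((N:ℝ)/2+s) (m*ε))
    (ne_of_lt (lt_of_le_of_lt (measure_mono hsub) measure_closedBall_lt_top))
    measurable_ker.aestronglyMeasurable
  have hmset : MeasurableSet {z : Pt N | ε ≤ ‖z‖ ∧ ‖z‖ ≤ 1} := by
    apply MeasurableSet.inter
    · exact (isClosed_le continuous_const continuous_norm).measurableSet
    · exact (isClosed_le continuous_norm continuous_const).measurableSet
  filter_upwards [ae_restrict_mem hmset] with z hz
  rw [Real.norm_eq_abs, abs_of_nonneg (ker_nonneg z)]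
  have h1 : ‖z‖ ^ (-((N:ℝ)/2+s)) ≤ ε ^ (-((N:ℝ)/2+s)) :=
    Real.rpow_le_rpow_of_nonpos hε hz.1 (by linarith)
  have h2 : besselK ((N:ℝ)/2+s) (m*‖z‖) ≤ besselK ((N:ℝ)/2+s) (m*ε) :=
    besselK_antitone hν.le (by positivity) (by nlinarith [hz.1])
  exact mul_le_mul h1 h2 (besselK_nonneg _ _) (Real.rpow_nonneg hε.le _)

lemma exp_decay_aux (hm : 0 < m) (N : ℕ) :
    ∃ C : ℝ, 0 ≤ C ∧ ∀ r : ℝ, 0 ≤ r →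
      Real.exp (-(m*r/2)) ≤ C * (1+r) ^ (-((N:ℝ)+1)) := by
  set c := max 1 (2*((N:ℝ)+1)/m) with hc
  have hc1 : (1:ℝ) ≤ c := le_max_left _ _
  have hc2 : 2*((N:ℝ)+1)/m ≤ c := le_max_right _ _
  have hNpos : (0:ℝ) < (N:ℝ)+1 := by positivity
  refine ⟨c ^ (N+1 : ℕ), by positivity, fun r hr => ?_⟩
  set X := m*r/(2*((N:ℝ)+1)) with hX
  have hX0 : 0 ≤ X := by positivity
  have h1 : 1 + r ≤ c * (1 + X) := by
    have hrX : r = (2*((N:ℝ)+1)/m) * X := by rw [hX]; field_simp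
    nlinarith [mul_le_mul_of_nonneg_right hc2 hX0]
  have h2 : 1 + X ≤ Real.exp X := by have := Real.add_one_le_exp X; linarith
  have h3 : (1+r) ^ (N+1 : ℕ) ≤ c ^ (N+1 : ℕ) * Real.exp (m*r/2) := by
    calc (1+r) ^ (N+1 : ℕ) ≤ (c * Real.exp X) ^ (N+1 : ℕ) := by
          apply pow_le_pow_left₀ (by linarith) (le_trans h1 (by nlinarith [Real.exp_pos X]))
      _ = c ^ (N+1 : ℕ) * (Real.exp X) ^ (N+1 : ℕ) := mul_pow _ _ _
      _ = c ^ (N+1 : ℕ) * Real.exp (((N:ℝ)+1) * X) := by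
          rw [← Real.exp_nat_mul]; push_cast; ring_nf
      _ = c ^ (N+1 : ℕ) * Real.exp (m*r/2) := by
          congr 1
          rw [hX]; field_simp
  have hppos : (0:ℝ) < (1+r) ^ (N+1 : ℕ) := by positivity
  have hCpos : (0:ℝ) < c ^ (N+1 : ℕ) := by positivity
  have hpow : (1+r) ^ (-((N:ℝ)+1)) = ((1+r) ^ (N+1 : ℕ))⁻¹ := by
    rw [← Real.rpow_natCast (1+r) (N+1), ← Real.rpow_neg (by linarith)]
    push_cast; ring_nf
  rw [hpow]
  have key2 : (1+r) ^ (N+1 : ℕ) / c ^ (N+1 : ℕ) ≤ Real.exp (m*r/2) :=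
    (div_le_iff₀' hCpos).2 h3
  calc Real.exp (-(m*r/2)) = (Real.exp (m*r/2))⁻¹ := Real.exp_neg _
    _ ≤ ((1+r) ^ (N+1 : ℕ) / c ^ (N+1 : ℕ))⁻¹ := by
        apply inv_anti₀ (by positivity) key2
    _ = c ^ (N+1 : ℕ) * ((1+r) ^ (N+1 : ℕ))⁻¹ := by field_simp

lemma ker_integrableOn_out (hN : 1 ≤ N) (hs : s ∈ Set.Ioo (0:ℝ) 1) (hm : 0 < m) :
    IntegrableOn (ker N s m) {z : Pt N | 1 ≤ ‖z‖} := by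
  have hν := nu_pos hN hs
  obtain ⟨C, hC0, hC⟩ := exp_decay_aux hm N
  have hfinrank : (Module.finrank ℝ (Pt N) : ℝ) < (N:ℝ)+1 := by
    rw [finrank_euclideanSpace, Fintype.card_fin]; linarith
  have hint : Integrable (fun z : Pt N =>
      (besselK ((N:ℝ)/2+s) (m/2) * C) * (1+‖z‖) ^ (-((N:ℝ)+1))) :=
    (integrable_one_add_norm hfinrank).const_mul _
  apply hint.integrableOn.mono'
    measurable_ker.aestronglyMeasurable
  have hmset : MeasurableSet {z : Pt N | 1 ≤ ‖z‖} :=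
    (isClosed_le continuous_const continuous_norm).measurableSet
  filter_upwards [ae_restrict_mem hmset] with z hz
  rw [Real.norm_eq_abs, abs_of_nonneg (ker_nonneg z)]
  have hz1 : (1:ℝ) ≤ ‖z‖ := hz
  have h1 : ‖z‖ ^ (-((N:ℝ)/2+s)) ≤ 1 :=
    Real.rpow_le_one_of_one_le_of_nonpos hz1 (by linarith)
  have h2 : besselK ((N:ℝ)/2+s) (m*‖z‖) ≤
      Real.exp (-(m*‖z‖/2)) * besselK ((N:ℝ)/2+s) (m/2) := by
    exact besselK_le_exp hν.le hm (le_mul_of_one_le_right hm.le hz1)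
  calc ker N s m z ≤ 1 * besselK ((N:ℝ)/2+s) (m*‖z‖) := by
        apply mul_le_mul_of_nonneg_right h1 (besselK_nonneg _ _)
    _ = besselK ((N:ℝ)/2+s) (m*‖z‖) := one_mul _
    _ ≤ Real.exp (-(m*‖z‖/2)) * besselK ((N:ℝ)/2+s) (m/2) := h2
    _ ≤ (C * (1+‖z‖) ^ (-((N:ℝ)+1))) * besselK ((N:ℝ)/2+s) (m/2) :=
        mul_le_mul_of_nonneg_right (hC ‖z‖ (norm_nonneg z)) (besselK_nonneg _ _)
    _ = (besselK ((N:ℝ)/2+s) (m/2) * C) * (1+‖z‖) ^ (-((N:ℝ)+1)) := by ring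

lemma ker_integrableOn_of_pos (hN : 1 ≤ N) (hs : s ∈ Set.Ioo (0:ℝ) 1) (hm : 0 < m)
    {ε : ℝ} (hε : 0 < ε) :
    IntegrableOn (ker N s m) {z : Pt N | ε < ‖z‖} := by
  apply IntegrableOn.mono_set
    ((ker_integrableOn_annulus hN hs hm hε).union (ker_integrableOn_out hN hs hm))
  intro z hz
  rcases le_or_gt ‖z‖ 1 with h | h
  · exact Or.inl ⟨le_of_lt hz, h⟩
  · exact Or.inr (le_of_lt h)

lemma ker_sq_integrableOn_ball (hN : 1 ≤ N) (hs : s ∈ Set.Ioo (0:ℝ) 1) (hm : 0 < m) :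
    IntegrableOn (fun z : Pt N => ‖z‖^2 * ker N s m z) (ball (0:Pt N) 1) := by
  haveI : Nontrivial (Pt N) :=
    Module.nontrivial_of_finrank_pos (R := ℝ) (by rw [finrank_euclideanSpace, Fintype.card_fin]; omega)
  have hν := nu_pos hN hs
  set ν := (N:ℝ)/2+s with hνdef
  set γ := (1-s)/2 with hγdef
  have hγ : 0 < γ := by rw [hγdef]; have := hs.2; linarith
  obtain ⟨C, hC0, hC⟩ := besselK_le_rpow hν.le hγ
  set t₀ := 2 - 2*ν - γ with ht₀
  have htN : -(N:ℝ) < t₀ := by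
    rw [ht₀, hνdef, hγdef]
    have := hs.2
    nlinarith
  have hint : IntegrableOn (fun z : Pt N => (C * m ^ (-(ν+γ))) * ‖z‖ ^ t₀)
      (ball (0:Pt N) 1) := (integrableOn_rpow_norm_ball hN htN).const_mul _
  apply hint.mono'
  · apply Measurable.aestronglyMeasurable
    exact (measurable_norm.pow_const 2).mul measurable_ker
  · have hae : ∀ᵐ z : Pt N ∂(volume.restrict (ball (0:Pt N) 1)), z ≠ 0 := by
      apply Filter.Eventually.filter_mono (ae_mono Measure.restrict_le_self)
      have h0 : volume ({(0:Pt N)} : Set (Pt N)) = 0 := measure_singleton 0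
      rw [ae_iff]
      convert h0 using 2
      ext z; simp
    filter_upwards [hae] with z hz0
    have hnz : (0:ℝ) < ‖z‖ := norm_pos_iff.2 hz0
    rw [Real.norm_eq_abs, abs_of_nonneg (mul_nonneg (by positivity) (ker_nonneg z))]
    have h2 : besselK ν (m*‖z‖) ≤ C * (m*‖z‖) ^ (-(ν+γ)) := hC _ (by positivity)
    calc ‖z‖^2 * ker N s m z = (‖z‖^2 * ‖z‖ ^ (-ν)) * besselK ν (m*‖z‖) := by
          simp only [_root_.ker]; ring
      _ ≤ (‖z‖^2 * ‖z‖ ^ (-ν)) * (C * (m*‖z‖) ^ (-(ν+γ))) := by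
          apply mul_le_mul_of_nonneg_left h2
          positivity
      _ = (C * m ^ (-(ν+γ))) * (‖z‖ ^ (2:ℝ) * ‖z‖ ^ (-ν) * ‖z‖ ^ (-(ν+γ))) := by
          rw [Real.mul_rpow hm.le hnz.le, Real.rpow_two]
          ring
      _ = (C * m ^ (-(ν+γ))) * ‖z‖ ^ t₀ := by
          rw [← Real.rpow_add hnz, ← Real.rpow_add hnz,
            show (2:ℝ) + -ν + -(ν+γ) = t₀ from by rw [ht₀]; ring]

end kersec


section calcsec

variable {N : ℕ}

lemma second_diff_bound {v : Pt N → ℝ} {x z : Pt N} {ρ K : ℝ} (hK : 0 ≤ K)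
    (hd : DifferentiableOn ℝ v (ball x ρ))
    (hlip : ∀ a ∈ ball x ρ, ∀ b ∈ ball x ρ, ‖fderiv ℝ v a - fderiv ℝ v b‖ ≤ K * ‖a - b‖)
    (hz : ‖z‖ < ρ) :
    |2 * v x - v (x + z) - v (x - z)| ≤ 2 * K * ‖z‖^2 := by
  have hρ : 0 < ρ := lt_of_le_of_lt (norm_nonneg z) hz
  set g : ℝ → ℝ := fun t => v (x + t • z) + v (x - t • z) with hg
  set g' : ℝ → ℝ := fun t =>
    (fderiv ℝ v (x + t • z)) z - (fderiv ℝ v (x - t • z)) z with hg'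
  have hmem : ∀ t ∈ Icc (0:ℝ) 1, x + t • z ∈ ball x ρ ∧ x - t • z ∈ ball x ρ := by
    intro t ht
    have h1 : ‖t • z‖ < ρ := by
      rw [norm_smul, Real.norm_eq_abs, abs_of_nonneg ht.1]
      calc t * ‖z‖ ≤ 1 * ‖z‖ := mul_le_mul_of_nonneg_right ht.2 (norm_nonneg z)
        _ = ‖z‖ := one_mul _
        _ < ρ := hz
    constructor
    · rw [mem_ball_iff_norm]; simpa using h1
    · rw [mem_ball_iff_norm]; simpa [norm_neg] using h1
  have hderiv : ∀ t ∈ Icc (0:ℝ) 1, HasDerivWithinAt g (g' t) (Icc 0 1) t := by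
    intro t ht
    obtain ⟨hm1, hm2⟩ := hmem t ht
    have c1 : HasDerivAt (fun t : ℝ => x + t • z) z t := by
      simpa using ((hasDerivAt_id t).smul_const z).const_add x
    have c2 : HasDerivAt (fun t : ℝ => x - t • z) (-z) t := by
      simpa using ((hasDerivAt_id t).smul_const z).const_sub x
    have hv1 : HasFDerivAt v (fderiv ℝ v (x + t • z)) (x + t • z) :=
      (hd.differentiableAt (isOpen_ball.mem_nhds hm1)).hasFDerivAt
    have hv2 : HasFDerivAt v (fderiv ℝ v (x - t • z)) (x - t • z) :=
      (hd.differentiableAt (isOpen_ball.mem_nhds hm2)).hasFDerivAt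
    have d1 := hv1.comp_hasDerivAt t c1
    have d2 := hv2.comp_hasDerivAt t c2
    have : HasDerivAt g ((fderiv ℝ v (x + t • z)) z + (fderiv ℝ v (x - t • z)) (-z)) t :=
      d1.add d2
    rw [map_neg] at this
    exact this.hasDerivWithinAt
  have hbound : ∀ t ∈ Ico (0:ℝ) 1, ‖g' t‖ ≤ 2 * K * ‖z‖^2 := by
    intro t ht
    obtain ⟨hm1, hm2⟩ := hmem t ⟨ht.1, le_of_lt ht.2⟩
    have h1 : g' t = (fderiv ℝ v (x + t • z) - fderiv ℝ v (x - t • z)) z := by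
      simp [hg', ContinuousLinearMap.sub_apply]
    have h2 : ‖(x + t • z) - (x - t • z)‖ = 2 * t * ‖z‖ := by
      have : (x + t • z) - (x - t • z) = (2*t) • z := by
        rw [two_mul]; module
      rw [this, norm_smul, Real.norm_eq_abs, abs_of_nonneg (by nlinarith [ht.1])]
    calc ‖g' t‖ ≤ ‖fderiv ℝ v (x + t • z) - fderiv ℝ v (x - t • z)‖ * ‖z‖ := by
          rw [h1]; exact ContinuousLinearMap.le_opNorm _ z
      _ ≤ (K * (2 * t * ‖z‖)) * ‖z‖ := by
          apply mul_le_mul_of_nonneg_right _ (norm_nonneg z)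
          have := hlip _ hm1 _ hm2
          rw [h2] at this; exact this
      _ ≤ 2 * K * ‖z‖^2 := by
          have hzz : ‖z‖^2 = ‖z‖*‖z‖ := pow_two _
          rw [hzz]
          nlinarith [mul_nonneg (mul_nonneg hK (mul_nonneg (norm_nonneg z) (norm_nonneg z)))
            (sub_nonneg.2 ht.2.le)]
  have := norm_image_sub_le_of_norm_deriv_le_segment' hderiv hbound 1 (right_mem_Icc.2 zero_le_one)
  have hg1 : g 1 = v (x + z) + v (x - z) := by simp [hg]
  have hg0 : g 0 = 2 * v x := by simp [hg]; ring
  rw [hg1, hg0, Real.norm_eq_abs] at this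
  calc |2 * v x - v (x + z) - v (x - z)| = |v (x + z) + v (x - z) - 2 * v x| := by
        rw [show 2 * v x - v (x + z) - v (x - z) = -(v (x + z) + v (x - z) - 2 * v x) from by ring,
          abs_neg]
    _ ≤ 2 * K * ‖z‖^2 * (1 - 0) := this
    _ = 2 * K * ‖z‖^2 := by ring

lemma exists_bump (hN : 1 ≤ N) :
    ∃ (φ : Pt N → ℝ) (Kφ : ℝ), 0 ≤ Kφ ∧ Continuous φ ∧ φ 0 = 1 ∧ (∀ y, 0 ≤ φ y) ∧
      (∀ y, φ y ≤ 1) ∧ (∀ y, 2 ≤ ‖y‖ → φ y = 0) ∧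
      (∀ x z : Pt N, |2 * φ x - φ (x + z) - φ (x - z)| ≤ Kφ * ‖z‖^2) := by
  set f : ContDiffBump (0 : Pt N) := ⟨1, 2, one_pos, one_lt_two⟩ with hf
  have hsmooth : ContDiff ℝ 2 f := f.contDiff (n := 2)
  have hΦ : ContDiff ℝ 1 (fderiv ℝ f) := hsmooth.fderiv_right (by norm_num)
  have hcs2 : HasCompactSupport (fderiv ℝ (fderiv ℝ (f : Pt N → ℝ))) :=
    (f.hasCompactSupport.fderiv ℝ).fderiv ℝ
  obtain ⟨C, hC⟩ := (hΦ.continuous_fderiv one_ne_zero).bounded_above_of_compact_support hcs2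
  have hC0 : 0 ≤ C := le_trans (norm_nonneg _) (hC 0)
  have hlip : ∀ a b : Pt N, ‖fderiv ℝ f a - fderiv ℝ f b‖ ≤ C * ‖a - b‖ := by
    intro a b
    have := Convex.norm_image_sub_le_of_norm_fderiv_le
      (f := fderiv ℝ (f : Pt N → ℝ)) (C := C) (s := Set.univ)
      (fun x _ => (hΦ.differentiable one_ne_zero).differentiableAt)
      (fun x _ => hC x) convex_univ (mem_univ b) (mem_univ a)
    exact this
  refine ⟨f, 2*C, by positivity, f.continuous, ?_, fun y => f.nonneg, fun y => f.le_one,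
    ?_, ?_⟩
  · exact f.one_of_mem_closedBall (by simp [hf])
  · intro y hy
    apply f.zero_of_le_dist
    simpa [hf, dist_zero_right] using hy
  · intro x z
    apply second_diff_bound (ρ := ‖z‖ + 1) hC0
      ((hsmooth.differentiable (by norm_num)).differentiableOn)
      (fun a _ b _ => hlip a b) (by linarith)

end calcsec

noncomputable def Af (N : ℕ) (s m : ℝ) (v : Pt N → ℝ) (x : Pt N) (ε : ℝ) : ℝ :=
  ∫ z in {z : Pt N | ε < ‖z‖}, (v x - v (x + z)) * ker N s m z

section Asec

variable {N : ℕ} {s m : ℝ}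

lemma measurableSet_normgt (ε : ℝ) : MeasurableSet {z : Pt N | ε < ‖z‖} :=
  (isOpen_lt continuous_const continuous_norm).measurableSet

lemma measurableSet_ann (ε ρ : ℝ) : MeasurableSet {z : Pt N | ε < ‖z‖ ∧ ‖z‖ < ρ} := by
  apply MeasurableSet.inter
  · exact (isOpen_lt continuous_const continuous_norm).measurableSet
  · exact (isOpen_lt continuous_norm continuous_const).measurableSet

lemma vdiff_bound {v : Pt N → ℝ} {B : ℝ} (hvb : ∀ y, |v y| ≤ B) (a b : Pt N) :
    |v a - v b| ≤ 2 * B := by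
  have := hvb a; have := hvb b
  have h := abs_sub (v a) (v b)
  calc |v a - v b| ≤ |v a| + |v b| := abs_sub _ _
    _ ≤ 2 * B := by linarith [abs_nonneg (v a)]

lemma integrand_aesm {v : Pt N → ℝ} (hvc : Continuous v) (x : Pt N) (μ : Measure (Pt N)) :
    AEStronglyMeasurable (fun z => (v x - v (x + z)) * ker N s m z) μ :=
  (((continuous_const.sub (hvc.comp (continuous_add_left x))).measurable).mul
    measurable_ker).aestronglyMeasurable

lemma af_integrableOn (hN : 1 ≤ N) (hs : s ∈ Set.Ioo (0:ℝ) 1) (hm : 0 < m)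
    {v : Pt N → ℝ} (hvc : Continuous v) {B : ℝ} (hvb : ∀ y, |v y| ≤ B)
    (x : Pt N) {S : Set (Pt N)} {ε : ℝ} (hε : 0 < ε) (hS : S ⊆ {z : Pt N | ε < ‖z‖}) :
    IntegrableOn (fun z => (v x - v (x + z)) * ker N s m z) S := by
  apply IntegrableOn.mono_set _ hS
  apply ((ker_integrableOn_of_pos hN hs hm hε).const_mul (2*B)).mono'
    (integrand_aesm hvc x _)
  filter_upwards with z
  rw [Real.norm_eq_abs, abs_mul, abs_of_nonneg (ker_nonneg z)]
  exact mul_le_mul_of_nonneg_right (vdiff_bound hvb x (x+z)) (ker_nonneg z)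

lemma af_symm (hN : 1 ≤ N) (hs : s ∈ Set.Ioo (0:ℝ) 1) (hm : 0 < m)
    {v : Pt N → ℝ} (hvc : Continuous v) {B : ℝ} (hvb : ∀ y, |v y| ≤ B)
    (x : Pt N) {ε ρ : ℝ} (hε : 0 < ε) :
    ∫ z in {z : Pt N | ε < ‖z‖ ∧ ‖z‖ < ρ}, (v x - v (x + z)) * ker N s m z
      = (1/2) * ∫ z in {z : Pt N | ε < ‖z‖ ∧ ‖z‖ < ρ},
          (2 * v x - v (x + z) - v (x - z)) * ker N s m z := by
  set S := {z : Pt N | ε < ‖z‖ ∧ ‖z‖ < ρ} with hSdef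
  have hSmeas : MeasurableSet S := measurableSet_ann ε ρ
  have hSneg : ∀ z : Pt N, -z ∈ S ↔ z ∈ S := by
    intro z; simp [hSdef, norm_neg]
  set f := fun z : Pt N => (v x - v (x + z)) * ker N s m z with hfdef
  set f2 := fun z : Pt N => (v x - v (x - z)) * ker N s m z with hf2def
  have hif : IntegrableOn f S :=
    af_integrableOn hN hs hm hvc hvb x hε (fun z hz => hz.1)
  have hindic : (fun z => S.indicator f (-z)) = S.indicator f2 := by
    funext z
    by_cases hzS : z ∈ S
    · rw [indicator_of_mem ((hSneg z).2 hzS), indicator_of_mem hzS]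
      simp only [hfdef, hf2def, _root_.ker, norm_neg, sub_neg_eq_add, sub_eq_add_neg]
    · rw [indicator_of_notMem (fun h => hzS ((hSneg z).1 h)), indicator_of_notMem hzS]
  have hif2 : IntegrableOn f2 S := by
    have h1 : Integrable (S.indicator f) := (integrable_indicator_iff hSmeas).2 hif
    have h2 := h1.comp_neg
    rw [hindic] at h2
    exact (integrable_indicator_iff hSmeas).1 h2
  have key : ∫ z in S, f2 z = ∫ z in S, f z := by
    rw [← integral_indicator hSmeas, ← integral_indicator hSmeas, ← hindic,
      integral_neg_eq_self]
  have hsum : ∫ z in S, (2 * v x - v (x + z) - v (x - z)) * ker N s m z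
      = (∫ z in S, f z) + ∫ z in S, f2 z := by
    rw [← integral_add hif hif2]
    apply setIntegral_congr_fun hSmeas
    intro z _
    simp only [hfdef, hf2def]
    ring
  rw [hsum, key]
  ring

noncomputable def I2c (N : ℕ) (s m : ℝ) : ℝ :=
  ∫ z in ball (0:Pt N) 1, ‖z‖^2 * ker N s m z

noncomputable def I1c (N : ℕ) (s m : ℝ) : ℝ :=
  ∫ z in {z : Pt N | 1 ≤ ‖z‖}, ker N s m z

lemma I2c_nonneg : 0 ≤ I2c N s m :=
  setIntegral_nonneg measurableSet_ball
    (fun z _ => mul_nonneg (sq_nonneg _) (ker_nonneg z))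

lemma I1c_nonneg : 0 ≤ I1c N s m :=
  setIntegral_nonneg (isClosed_le continuous_const continuous_norm).measurableSet
    (fun z _ => ker_nonneg z)

lemma sym_integrand_aesm {v : Pt N → ℝ} (hvc : Continuous v) (x : Pt N)
    (μ : Measure (Pt N)) :
    AEStronglyMeasurable (fun z => (2 * v x - v (x + z) - v (x - z)) * ker N s m z) μ := by
  apply Measurable.aestronglyMeasurable
  apply Measurable.mul _ measurable_ker
  apply Measurable.sub
  apply Measurable.sub
  · exact measurable_const
  · exact (hvc.comp (continuous_add_left x)).measurable
  · exact (hvc.comp (continuous_const.sub continuous_id)).measurable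

lemma sym_integrableOn_of_bound (hN : 1 ≤ N) (hs : s ∈ Set.Ioo (0:ℝ) 1) (hm : 0 < m)
    {v : Pt N → ℝ} (hvc : Continuous v) (x : Pt N) {K : ℝ}
    {S : Set (Pt N)} (hS : S ⊆ ball (0:Pt N) 1) (hSm : MeasurableSet S)
    (hsd : ∀ z ∈ S, |2 * v x - v (x + z) - v (x - z)| ≤ K * ‖z‖^2) :
    IntegrableOn (fun z => (2 * v x - v (x + z) - v (x - z)) * ker N s m z) S := by
  apply (((ker_sq_integrableOn_ball hN hs hm).mono_set hS).const_mul K).mono'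
    (sym_integrand_aesm hvc x _)
  filter_upwards [ae_restrict_mem hSm] with z hz
  rw [Real.norm_eq_abs, abs_mul, abs_of_nonneg (ker_nonneg z)]
  calc |2 * v x - v (x + z) - v (x - z)| * ker N s m z ≤ (K * ‖z‖^2) * ker N s m z :=
        mul_le_mul_of_nonneg_right (hsd z hz) (ker_nonneg z)
    _ = K * (‖z‖^2 * ker N s m z) := by ring

lemma af_upper (hN : 1 ≤ N) (hs : s ∈ Set.Ioo (0:ℝ) 1) (hm : 0 < m)
    {v : Pt N → ℝ} (hvc : Continuous v) {B K : ℝ} (hB : 0 ≤ B) (hK : 0 ≤ K)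
    (hvb : ∀ y, |v y| ≤ B)
    (hsd : ∀ x z : Pt N, |2 * v x - v (x + z) - v (x - z)| ≤ K * ‖z‖^2)
    (x : Pt N) {ε : ℝ} (hε : 0 < ε) :
    Af N s m v x ε ≤ K/2 * I2c N s m + (2*B) * I1c N s m := by
  have hint_out_ker := ker_integrableOn_out hN hs hm
  have hmeas_out : MeasurableSet {z : Pt N | 1 ≤ ‖z‖} :=
    (isClosed_le continuous_const continuous_norm).measurableSet
  have hf_out : IntegrableOn (fun z => (v x - v (x + z)) * ker N s m z)
      {z : Pt N | 1 ≤ ‖z‖} :=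
    af_integrableOn hN hs hm hvc hvb x one_half_pos
      (fun z hz => show (1:ℝ)/2 < ‖z‖ from lt_of_lt_of_le one_half_lt_one hz)
  have hout_le : ∀ {S : Set (Pt N)}, S ⊆ {z : Pt N | 1 ≤ ‖z‖} → MeasurableSet S →
      (∫ z in S, (v x - v (x + z)) * ker N s m z) ≤ (2*B) * I1c N s m := by
    intro S hSsub hSm
    calc (∫ z in S, (v x - v (x + z)) * ker N s m z)
        ≤ ∫ z in S, (2*B) * ker N s m z := by
          apply setIntegral_mono_on (hf_out.mono_set hSsub)
            ((hint_out_ker.mono_set hSsub).const_mul _) hSm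
          intro z _
          calc (v x - v (x + z)) * ker N s m z ≤ |v x - v (x + z)| * ker N s m z :=
                mul_le_mul_of_nonneg_right (le_abs_self _) (ker_nonneg z)
            _ ≤ (2*B) * ker N s m z :=
                mul_le_mul_of_nonneg_right (vdiff_bound hvb x (x+z)) (ker_nonneg z)
      _ = (2*B) * ∫ z in S, ker N s m z := by rw [MeasureTheory.integral_const_mul]
      _ ≤ (2*B) * I1c N s m := by
          apply mul_le_mul_of_nonneg_left _ (by linarith)
          apply setIntegral_mono_set (hint_out_ker)
            (Eventually.of_forall (fun z => ker_nonneg z)) (hSsub.eventuallyLE)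
  rcases lt_or_ge ε 1 with h1 | h1
  · have hsplit : {z : Pt N | ε < ‖z‖}
        = {z : Pt N | ε < ‖z‖ ∧ ‖z‖ < 1} ∪ {z : Pt N | 1 ≤ ‖z‖} := by
      ext z; simp only [mem_setOf_eq, mem_union]
      constructor
      · intro hz
        rcases lt_or_ge ‖z‖ 1 with h | h
        · exact Or.inl ⟨hz, h⟩
        · exact Or.inr h
      · rintro (⟨h, _⟩ | h)
        · exact h
        · linarith
    have hdisj : Disjoint {z : Pt N | ε < ‖z‖ ∧ ‖z‖ < 1} {z : Pt N | 1 ≤ ‖z‖} := by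
      apply Set.disjoint_left.2
      rintro z ⟨_, h2⟩ h3
      simp only [mem_setOf_eq] at h3
      linarith
    have hann_sub : {z : Pt N | ε < ‖z‖ ∧ ‖z‖ < 1} ⊆ ball (0:Pt N) 1 := by
      intro z hz; rw [mem_ball_zero_iff]; exact hz.2
    have hf_ann : IntegrableOn (fun z => (v x - v (x + z)) * ker N s m z)
        {z : Pt N | ε < ‖z‖ ∧ ‖z‖ < 1} :=
      af_integrableOn hN hs hm hvc hvb x hε (fun z hz => hz.1)
    have hsym_int := sym_integrableOn_of_bound hN hs hm hvc x hann_sub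
      (measurableSet_ann ε 1) (fun z _ => hsd x z)
    rw [Af, hsplit, setIntegral_union hdisj hmeas_out hf_ann hf_out]
    have hann_le : (∫ z in {z : Pt N | ε < ‖z‖ ∧ ‖z‖ < 1}, (v x - v (x + z)) * ker N s m z)
        ≤ K/2 * I2c N s m := by
      rw [af_symm hN hs hm hvc hvb x hε]
      have step1 : (∫ z in {z : Pt N | ε < ‖z‖ ∧ ‖z‖ < 1},
          (2 * v x - v (x + z) - v (x - z)) * ker N s m z)
          ≤ ∫ z in {z : Pt N | ε < ‖z‖ ∧ ‖z‖ < 1}, K * (‖z‖^2 * ker N s m z) := by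
        apply setIntegral_mono_on hsym_int
          (((ker_sq_integrableOn_ball hN hs hm).mono_set hann_sub).const_mul K)
          (measurableSet_ann ε 1)
        intro z _
        calc (2 * v x - v (x + z) - v (x - z)) * ker N s m z
            ≤ |2 * v x - v (x + z) - v (x - z)| * ker N s m z :=
              mul_le_mul_of_nonneg_right (le_abs_self _) (ker_nonneg z)
          _ ≤ (K * ‖z‖^2) * ker N s m z :=
              mul_le_mul_of_nonneg_right (hsd x z) (ker_nonneg z)
          _ = K * (‖z‖^2 * ker N s m z) := by ring
      have step2 : (∫ z in {z : Pt N | ε < ‖z‖ ∧ ‖z‖ < 1}, K * (‖z‖^2 * ker N s m z))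
          ≤ K * I2c N s m := by
        rw [MeasureTheory.integral_const_mul]
        apply mul_le_mul_of_nonneg_left _ hK
        apply setIntegral_mono_set (ker_sq_integrableOn_ball hN hs hm)
          (Eventually.of_forall (fun z => mul_nonneg (sq_nonneg _) (ker_nonneg z)))
          (hann_sub.eventuallyLE)
      calc (1/2) * (∫ z in {z : Pt N | ε < ‖z‖ ∧ ‖z‖ < 1},
          (2 * v x - v (x + z) - v (x - z)) * ker N s m z)
          ≤ (1/2) * (K * I2c N s m) := by
            apply mul_le_mul_of_nonneg_left (le_trans step1 step2) (by norm_num)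
        _ = K/2 * I2c N s m := by ring
    have := hout_le (subset_refl _) hmeas_out
    linarith
  · have hsub : {z : Pt N | ε < ‖z‖} ⊆ {z : Pt N | 1 ≤ ‖z‖} := by
      intro z hz
      simp only [mem_setOf_eq] at *
      linarith
    have h2 := hout_le hsub (measurableSet_normgt ε)
    have h3 : 0 ≤ K/2 * I2c N s m := by
      apply mul_nonneg (by linarith) (I2c_nonneg)
    rw [Af]
    linarith

lemma ae_ne_zero (hN : 1 ≤ N) (μ : Measure (Pt N)) (hac : μ ≪ volume) :
    ∀ᵐ z : Pt N ∂μ, z ≠ 0 := by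
  haveI : Nontrivial (Pt N) := Module.nontrivial_of_finrank_pos (R := ℝ)
    (by rw [finrank_euclideanSpace, Fintype.card_fin]; omega)
  have h0 : volume ({(0:Pt N)} : Set (Pt N)) = 0 := measure_singleton 0
  have h1 : μ ({(0:Pt N)} : Set (Pt N)) = 0 := hac h0
  rw [ae_iff]
  convert h1 using 2
  ext z; simp

lemma af_tendsto (hN : 1 ≤ N) (hs : s ∈ Set.Ioo (0:ℝ) 1) (hm : 0 < m)
    {u : Pt N → ℝ} (hc : Continuous u) {B : ℝ} (hub : ∀ y, |u y| ≤ B)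
    (x : Pt N) {ρ₀ : ℝ} (hρ₀ : 0 < ρ₀) (hd : DifferentiableOn ℝ u (ball x ρ₀))
    {K : ℝ} (hK : 0 ≤ K)
    (hlip : ∀ a ∈ ball x ρ₀, ∀ b ∈ ball x ρ₀, ‖fderiv ℝ u a - fderiv ℝ u b‖ ≤ K * ‖a - b‖) :
    ∃ T : ℝ, Tendsto (Af N s m u x) (𝓝[>] (0:ℝ)) (𝓝 T) := by
  set ρ := min ρ₀ 1 / 2 with hρdef
  have hρpos : 0 < ρ := by
    rw [hρdef]; have := lt_min hρ₀ one_pos; linarith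
  have hmin1 : min ρ₀ 1 ≤ 1 := min_le_right _ _
  have hmin0 : min ρ₀ 1 ≤ ρ₀ := min_le_left _ _
  have hρ1 : ρ < 1 := by rw [hρdef]; linarith
  have hρρ₀ : ρ < ρ₀ := by
    rw [hρdef]
    have := lt_min hρ₀ one_pos
    linarith
  have hsd : ∀ z : Pt N, ‖z‖ < ρ → |2 * u x - u (x + z) - u (x - z)| ≤ (2*K) * ‖z‖^2 :=
    fun z hz => second_diff_bound hK hd hlip (lt_trans hz hρρ₀)
  set Sy := fun z : Pt N => (2 * u x - u (x + z) - u (x - z)) * ker N s m z with hSydef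
  set out := {z : Pt N | ρ ≤ ‖z‖} with houtdef
  have hout_meas : MeasurableSet out :=
    (isClosed_le continuous_const continuous_norm).measurableSet
  have hCst_int : IntegrableOn (fun z => (u x - u (x + z)) * ker N s m z) out :=
    af_integrableOn hN hs hm hc hub x (half_pos hρpos)
      (fun z hz => show ρ/2 < ‖z‖ from lt_of_lt_of_le (by linarith) hz)
  set Cst := ∫ z in out, (u x - u (x + z)) * ker N s m z with hCstdef
  have hballρ : MeasurableSet {z : Pt N | ‖z‖ < ρ} :=
    (isOpen_lt continuous_norm continuous_const).measurableSet
  have hsubρ1 : {z : Pt N | ‖z‖ < ρ} ⊆ ball (0:Pt N) 1 := by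
    intro z hz; rw [mem_ball_zero_iff]
    exact lt_trans hz hρ1
  have hbound_int : Integrable (({z : Pt N | ‖z‖ < ρ}).indicator
      (fun z => (2*K) * (‖z‖^2 * ker N s m z))) := by
    rw [integrable_indicator_iff hballρ]
    exact ((ker_sq_integrableOn_ball hN hs hm).mono_set hsubρ1).const_mul (2*K)
  have hG : Tendsto (fun ε => ∫ z, ({z : Pt N | ε < ‖z‖ ∧ ‖z‖ < ρ}).indicator Sy z)
      (𝓝[>] (0:ℝ)) (𝓝 (∫ z, ({z : Pt N | 0 < ‖z‖ ∧ ‖z‖ < ρ}).indicator Sy z)) := by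
    apply tendsto_integral_filter_of_dominated_convergence
      (({z : Pt N | ‖z‖ < ρ}).indicator (fun z => (2*K) * (‖z‖^2 * ker N s m z)))
    · exact Eventually.of_forall fun ε =>
        ((sym_integrand_aesm hc x volume).indicator (measurableSet_ann ε ρ))
    · apply Eventually.of_forall
      intro ε
      apply Eventually.of_forall
      intro z
      by_cases hz : z ∈ {z : Pt N | ε < ‖z‖ ∧ ‖z‖ < ρ}
      · rw [indicator_of_mem hz, indicator_of_mem (show z ∈ {z : Pt N | ‖z‖ < ρ} from hz.2)]
        rw [Real.norm_eq_abs, hSydef, abs_mul, abs_of_nonneg (ker_nonneg z)]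
        calc |2 * u x - u (x + z) - u (x - z)| * ker N s m z
            ≤ ((2*K) * ‖z‖^2) * ker N s m z :=
              mul_le_mul_of_nonneg_right (hsd z hz.2) (ker_nonneg z)
          _ = (2*K) * (‖z‖^2 * ker N s m z) := by ring
      · rw [indicator_of_notMem hz, norm_zero]
        exact indicator_nonneg (fun y _ =>
          mul_nonneg (by linarith : (0:ℝ) ≤ 2*K)
            (mul_nonneg (sq_nonneg _) (ker_nonneg y))) z
    · exact hbound_int
    · filter_upwards [ae_ne_zero hN volume Measure.AbsolutelyContinuous.rfl] with z hz0
      have hz : 0 < ‖z‖ := norm_pos_iff.2 hz0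
      apply Tendsto.congr' _ tendsto_const_nhds
      filter_upwards [Ioo_mem_nhdsGT_of_mem (show (0:ℝ) ∈ Ico 0 ‖z‖ from ⟨le_rfl, hz⟩)]
        with ε hε
      by_cases hzρ : ‖z‖ < ρ
      · rw [indicator_of_mem (show z ∈ {z : Pt N | 0 < ‖z‖ ∧ ‖z‖ < ρ} from ⟨hz, hzρ⟩),
          indicator_of_mem (show z ∈ {z : Pt N | ε < ‖z‖ ∧ ‖z‖ < ρ} from ⟨hε.2, hzρ⟩)]
      · rw [indicator_of_notMem (fun h => hzρ h.2), indicator_of_notMem (fun h => hzρ h.2)]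
  have hEq : (Af N s m u x) =ᶠ[𝓝[>] (0:ℝ)]
      (fun ε => Cst + (1/2) * ∫ z, ({z : Pt N | ε < ‖z‖ ∧ ‖z‖ < ρ}).indicator Sy z) := by
    filter_upwards [Ioo_mem_nhdsGT_of_mem (show (0:ℝ) ∈ Ico 0 ρ from ⟨le_rfl, hρpos⟩)]
      with ε hε
    have hsplit : {z : Pt N | ε < ‖z‖} = {z : Pt N | ε < ‖z‖ ∧ ‖z‖ < ρ} ∪ out := by
      ext z; simp only [mem_setOf_eq, mem_union, houtdef]
      constructor
      · intro hzz
        rcases lt_or_ge ‖z‖ ρ with h | h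
        · exact Or.inl ⟨hzz, h⟩
        · exact Or.inr h
      · rintro (⟨h, _⟩ | h)
        · exact h
        · exact lt_of_lt_of_le hε.2 h
    have hdisj : Disjoint {z : Pt N | ε < ‖z‖ ∧ ‖z‖ < ρ} out := by
      apply Set.disjoint_left.2
      rintro z ⟨_, h2⟩ h3
      simp only [houtdef, mem_setOf_eq] at h3
      linarith
    have hann_int : IntegrableOn (fun z => (u x - u (x + z)) * ker N s m z)
        {z : Pt N | ε < ‖z‖ ∧ ‖z‖ < ρ} :=
      af_integrableOn hN hs hm hc hub x hε.1 (fun z hz => hz.1)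
    rw [Af, hsplit, setIntegral_union hdisj hout_meas hann_int hCst_int,
      af_symm hN hs hm hc hub x hε.1, ← integral_indicator (measurableSet_ann ε ρ)]
    ring
  refine ⟨Cst + (1/2) * ∫ z, ({z : Pt N | 0 < ‖z‖ ∧ ‖z‖ < ρ}).indicator Sy z, ?_⟩
  exact (Tendsto.congr' hEq.symm (tendsto_const_nhds.add (hG.const_mul (1/2))))

end Asec

end Aux


lemma psop_eq {N : ℕ} {s m : ℝ} (u : Pt N → ℝ) (x : Pt N) :
    psOp N s m u x
      = cNs N s * m ^ ((N:ℝ)/2 + s) * limUnder (𝓝[>] (0:ℝ)) (Af N s m u x)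
        + m ^ (2*s) * u x := by
  rw [psOp]
  have hfun : (fun ε : ℝ => ∫ y in {y : Pt N | ε < dist x y},
      (u x - u y) * (dist x y) ^ (-((N : ℝ)/2 + s)) *
        besselK ((N : ℝ)/2 + s) (m * dist x y)) = Af N s m u x := by
    funext ε
    have hmeasS : MeasurableSet {y : Pt N | ε < dist x y} :=
      (isOpen_lt continuous_const (continuous_const.dist continuous_id)).measurableSet
    set G : Pt N → ℝ := fun y => (u x - u y) * (dist x y) ^ (-((N : ℝ)/2 + s)) *
        besselK ((N : ℝ)/2 + s) (m * dist x y) with hG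
    calc ∫ y in {y : Pt N | ε < dist x y}, G y
        = ∫ y, ({y : Pt N | ε < dist x y}).indicator G y := (integral_indicator hmeasS).symm
      _ = ∫ z, ({y : Pt N | ε < dist x y}).indicator G (x + z) :=
          (integral_add_left_eq_self (({y : Pt N | ε < dist x y}).indicator G) x).symm
      _ = ∫ z, ({z : Pt N | ε < ‖z‖}).indicator
            (fun z => (u x - u (x + z)) * ker N s m z) z := by
          congr 1
          funext z
          by_cases hz : ε < ‖z‖
          · rw [indicator_of_mem (show x + z ∈ {y : Pt N | ε < dist x y} by
                simp only [mem_setOf_eq, dist_self_add_right]; exact hz),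
              indicator_of_mem (show z ∈ {z : Pt N | ε < ‖z‖} from hz)]
            rw [hG]
            simp only [dist_self_add_right, _root_.ker]
            ring
          · rw [indicator_of_notMem (show x + z ∉ {y : Pt N | ε < dist x y} by
                simp only [mem_setOf_eq, dist_self_add_right]; exact hz),
              indicator_of_notMem (show z ∉ {z : Pt N | ε < ‖z‖} from hz)]
      _ = Af N s m u x ε := integral_indicator (measurableSet_normgt ε)
  rw [hfun]

lemma cNs_pos {N : ℕ} {s : ℝ} (hs : s ∈ Set.Ioo (0:ℝ) 1) : 0 < cNs N s := by
  rw [cNs]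
  have h1 : (0:ℝ) < Real.pi := Real.pi_pos
  have h2 : 0 < Real.Gamma (2 - s) := Real.Gamma_pos_of_pos (by linarith [hs.2])
  have h3 : 0 < s * (1 - s) := mul_pos hs.1 (by linarith [hs.2])
  positivity

set_option maxHeartbeats 2000000 in
/-- Liouville theorem. -/
theorem liouville_theorem
    (N : ℕ) (hN : 1 ≤ N) (s m : ℝ) (hs : s ∈ Set.Ioo (0:ℝ) 1) (hm : 0 < m)
    (u : Pt N → ℝ) (f : ℝ → ℝ)
    (hu : memLs N s u) (hreg : C11loc N Set.univ u)
    (hb : ∃ B : ℝ, ∀ x, |u x| ≤ B)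
    (heq : ∀ x : Pt N, psOp N s m u x = f (u x))
    (hf : ∃ L < m ^ (2*s), ∀ t₁ t₂ : ℝ,
      sInf (Set.range u) ≤ t₂ → t₂ < t₁ → t₁ ≤ sSup (Set.range u) →
      f t₁ - f t₂ ≤ L * (t₁ - t₂)) :
    ∃ C : ℝ, (∀ x : Pt N, u x = C) ∧ f C = m ^ (2*s) * C := by
  obtain ⟨B, hB⟩ := hb
  have hB0 : (0:ℝ) ≤ B := le_trans (abs_nonneg _) (hB 0)
  obtain ⟨L, hL, hLf⟩ := hf
  -- regularity consequences
  have hdiff : ∀ x : Pt N, DifferentiableAt ℝ u x := by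
    intro x
    obtain ⟨ε, hε, _, hd, _⟩ := hreg x (mem_univ x)
    exact hd.differentiableAt (isOpen_ball.mem_nhds (mem_ball_self hε))
  have hc : Continuous u := by
    rw [continuous_iff_continuousAt]
    exact fun x => (hdiff x).continuousAt
  -- limit of the principal value integrals
  set T : Pt N → ℝ := fun x => limUnder (𝓝[>] (0:ℝ)) (Af N s m u x) with hTdef
  have hT : ∀ x : Pt N, Tendsto (Af N s m u x) (𝓝[>] (0:ℝ)) (𝓝 (T x)) := by
    intro x
    obtain ⟨ρ₀, hρ₀, _, hd, K, hlip⟩ := hreg x (mem_univ x)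
    have hlip' : ∀ a ∈ ball x ρ₀, ∀ b ∈ ball x ρ₀,
        ‖fderiv ℝ u a - fderiv ℝ u b‖ ≤ (K:ℝ) * ‖a - b‖ := by
      intro a ha b hb
      have := hlip.dist_le_mul a ha b hb
      rwa [dist_eq_norm, dist_eq_norm] at this
    obtain ⟨T', hT'⟩ := af_tendsto hN hs hm hc hB x hρ₀ hd K.coe_nonneg hlip'
    have : T x = T' := by rw [hTdef]; exact hT'.limUnder_eq
    rwa [this]
  set c : ℝ := cNs N s * m ^ ((N:ℝ)/2 + s) with hcdef
  have hcpos : 0 < c := mul_pos (cNs_pos hs) (Real.rpow_pos_of_pos hm _)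
  have heqT : ∀ x : Pt N, c * T x + m ^ (2*s) * u x = f (u x) := by
    intro x
    have := heq x
    rw [psop_eq u x] at this
    exact this
  have hbdd : BddAbove (Set.range u) := by
    refine ⟨B, ?_⟩
    rintro y ⟨t, rfl⟩
    exact le_trans (le_abs_self _) (hB t)
  have hbddb : BddBelow (Set.range u) := by
    refine ⟨-B, ?_⟩
    rintro y ⟨t, rfl⟩
    have := hB t
    have := neg_abs_le (u t)
    linarith
  obtain ⟨φ, Kφ, hKφ0, hφc, hφ0, hφnn, hφle1, hφsupp, hφsd⟩ := exists_bump hN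
  -- main step
  have key : ∀ (h : Pt N) (x : Pt N), u x - u (x + h) ≤ 0 := by
    intro h
    by_contra hcon
    push_neg at hcon
    obtain ⟨x₀', hx₀'⟩ := hcon
    set w : Pt N → ℝ := fun y => u y - u (y + h) with hwdef
    have hwc : Continuous w := hc.sub (hc.comp (continuous_id.add continuous_const))
    have hwb : ∀ y, |w y| ≤ 2*B := fun y => vdiff_bound hB y (y + h)
    have hrangew : (Set.range w).Nonempty := ⟨w 0, mem_range_self 0⟩
    have hwbdd : BddAbove (Set.range w) := by
      refine ⟨2*B, ?_⟩
      rintro y ⟨t, rfl⟩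
      exact le_trans (le_abs_self _) (hwb t)
    set S := sSup (Set.range w) with hSdef
    have hS0 : 0 < S := lt_of_lt_of_le hx₀' (le_csSup hwbdd (mem_range_self x₀'))
    set Cφ : ℝ := Kφ/2 * I2c N s m + (2*1) * I1c N s m with hCφdef
    have hCφ0 : 0 ≤ Cφ := by
      have := I2c_nonneg (N := N) (s := s) (m := m)
      have := I1c_nonneg (N := N) (s := s) (m := m)
      rw [hCφdef]; nlinarith
    set P : ℝ := m ^ (2*s) - L with hPdef
    have hP0 : 0 < P := by rw [hPdef]; linarith
    set δ : ℝ := P * S / (2 * (P + 2 * c * Cφ)) with hδdef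
    have hden : 0 < P + 2 * c * Cφ := by nlinarith
    have hδ0 : 0 < δ := by rw [hδdef]; positivity
    have hδS : δ ≤ S/2 := by
      rw [hδdef, div_le_div_iff₀ (by linarith) (by norm_num)]
      nlinarith [mul_nonneg (mul_nonneg hcpos.le hCφ0) hS0.le]
    obtain ⟨val, ⟨x₀, rfl⟩, hx₀⟩ := exists_lt_of_lt_csSup hrangew
      (show S - δ < S by linarith)
    set φ₀ : Pt N → ℝ := fun y => φ (y - x₀) with hφ₀def
    have hφ₀c : Continuous φ₀ := hφc.comp (continuous_id.sub continuous_const)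
    have hφ₀b : ∀ y, |φ₀ y| ≤ 1 := fun y => abs_le.2 ⟨by linarith [hφnn (y - x₀)], hφle1 _⟩
    have hφ₀sd : ∀ a z : Pt N, |2 * φ₀ a - φ₀ (a+z) - φ₀ (a-z)| ≤ Kφ * ‖z‖^2 := by
      intro a z
      have h0 := hφsd (a - x₀) z
      have e1 : a + z - x₀ = (a - x₀) + z := by abel
      have e2 : a - z - x₀ = (a - x₀) - z := by abel
      simp only [hφ₀def, e1, e2]
      exact h0
    set v : Pt N → ℝ := fun y => w y + (2*δ) * φ₀ y with hvdef
    have hvc : Continuous v := hwc.add (continuous_const.mul hφ₀c)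
    obtain ⟨xs, hxsmem, hxsmax⟩ := (isCompact_closedBall x₀ 2).exists_isMaxOn
      ⟨x₀, mem_closedBall_self (by norm_num)⟩ hvc.continuousOn
    have hvx₀ : v x₀ = w x₀ + 2*δ := by
      simp only [hvdef, hφ₀def]
      rw [sub_self, hφ0]
      ring
    have hglob : ∀ y, v y ≤ v xs := by
      intro y
      by_cases hy : y ∈ closedBall x₀ 2
      · exact hxsmax hy
      · have hyφ : φ₀ y = 0 := by
          apply hφsupp
          rw [mem_closedBall, dist_eq_norm] at hy
          push_neg at hy
          linarith
        have h1 : v y = w y := by rw [hvdef]; simp [hyφ]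
        have h2 : v x₀ ≤ v xs := hxsmax (mem_closedBall_self (by norm_num))
        have h4 : w y ≤ S := le_csSup hwbdd (mem_range_self y)
        rw [h1]
        calc w y ≤ S := h4
          _ ≤ w x₀ + 2*δ := by linarith
          _ = v x₀ := hvx₀.symm
          _ ≤ v xs := h2
    have hwxs : S - δ ≤ w xs := by
      have h2 : v x₀ ≤ v xs := hxsmax (mem_closedBall_self (by norm_num))
      have hφb := hφle1 (xs - x₀)
      have hφnn' := hφnn (xs - x₀)
      rw [hvx₀] at h2
      simp only [hvdef, hφ₀def] at h2 ⊢
      nlinarith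
    have hwpos : 0 < w xs := by linarith
    have hmax : ∀ z : Pt N, (2*δ) * (φ₀ (xs + z) - φ₀ xs) ≤ w xs - w (xs + z) := by
      intro z
      have := hglob (xs + z)
      simp only [hvdef] at this
      linarith
    -- lower bound on the difference of the truncated integrals
    have hAdiff : ∀ ε : ℝ, 0 < ε →
        -((2*δ) * Cφ) ≤ Af N s m u xs ε - Af N s m u (xs + h) ε := by
      intro ε hε
      have hint1 : IntegrableOn (fun z => (u xs - u (xs + z)) * ker N s m z)
          {z : Pt N | ε < ‖z‖} := af_integrableOn hN hs hm hc hB xs hε (subset_refl _)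
      have hint2 : IntegrableOn (fun z => (u (xs+h) - u ((xs+h) + z)) * ker N s m z)
          {z : Pt N | ε < ‖z‖} := af_integrableOn hN hs hm hc hB (xs+h) hε (subset_refl _)
      have hsub : Af N s m u xs ε - Af N s m u (xs + h) ε
          = ∫ z in {z : Pt N | ε < ‖z‖}, (w xs - w (xs + z)) * ker N s m z := by
        rw [Af, Af, ← integral_sub hint1 hint2]
        apply setIntegral_congr_fun (measurableSet_normgt ε)
        intro z _
        simp only [hwdef]
        rw [add_right_comm xs h z]
        ring
      have hintw : IntegrableOn (fun z => (w xs - w (xs + z)) * ker N s m z)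
          {z : Pt N | ε < ‖z‖} := by
        apply (hint1.sub hint2).congr
        apply ae_of_all
        intro z
        simp only [Pi.sub_apply, hwdef]
        rw [add_right_comm xs h z]
        ring
      have hintφ : IntegrableOn (fun z => ((2*δ) * (φ₀ (xs + z) - φ₀ xs)) * ker N s m z)
          {z : Pt N | ε < ‖z‖} := by
        apply ((af_integrableOn hN hs hm hφ₀c hφ₀b xs hε (subset_refl _)).const_mul
          (-(2*δ))).congr
        apply ae_of_all
        intro z
        ring
      have hmono : (∫ z in {z : Pt N | ε < ‖z‖},
            ((2*δ) * (φ₀ (xs + z) - φ₀ xs)) * ker N s m z)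
          ≤ ∫ z in {z : Pt N | ε < ‖z‖}, (w xs - w (xs + z)) * ker N s m z := by
        apply setIntegral_mono_on hintφ hintw (measurableSet_normgt ε)
        intro z _
        exact mul_le_mul_of_nonneg_right (hmax z) (ker_nonneg z)
      have hevalφ : (∫ z in {z : Pt N | ε < ‖z‖},
            ((2*δ) * (φ₀ (xs + z) - φ₀ xs)) * ker N s m z)
          = -(2*δ) * Af N s m φ₀ xs ε := by
        rw [Af, ← MeasureTheory.integral_const_mul]
        apply setIntegral_congr_fun (measurableSet_normgt ε)
        intro z _
        ring
      have hup : Af N s m φ₀ xs ε ≤ Cφ := by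
        rw [hCφdef]
        exact af_upper hN hs hm hφ₀c zero_le_one hKφ0 hφ₀b hφ₀sd xs hε
      have hlast : -((2*δ) * Cφ) ≤ -(2*δ) * Af N s m φ₀ xs ε := by
        have h2δ : (0:ℝ) ≤ 2*δ := by linarith
        nlinarith
      rw [hsub]
      calc -((2*δ) * Cφ) ≤ -(2*δ) * Af N s m φ₀ xs ε := hlast
        _ = ∫ z in {z : Pt N | ε < ‖z‖},
              ((2*δ) * (φ₀ (xs + z) - φ₀ xs)) * ker N s m z := hevalφ.symm
        _ ≤ _ := hmono
    have hTd : Tendsto (fun ε => Af N s m u xs ε - Af N s m u (xs + h) ε)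
        (𝓝[>] (0:ℝ)) (𝓝 (T xs - T (xs + h))) := (hT xs).sub (hT (xs + h))
    have hTlow : -((2*δ) * Cφ) ≤ T xs - T (xs + h) := by
      apply ge_of_tendsto hTd
      filter_upwards [self_mem_nhdsWithin] with ε hε
      exact hAdiff ε hε
    -- use the equation and the slope bound
    have hfeq : c * (T xs - T (xs + h)) + m ^ (2*s) * (w xs)
        = f (u xs) - f (u (xs + h)) := by
      have e1 := heqT xs
      have e2 := heqT (xs + h)
      simp only [hwdef]
      linear_combination e1 - e2
    have hr1 : sInf (Set.range u) ≤ u (xs + h) := csInf_le hbddb (mem_range_self _)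
    have hr2 : u xs ≤ sSup (Set.range u) := le_csSup hbdd (mem_range_self _)
    have hlt : u (xs + h) < u xs := by
      have : 0 < u xs - u (xs + h) := hwpos
      linarith
    have happ := hLf (u xs) (u (xs + h)) hr1 hlt hr2
    -- combine everything
    have hwS : S - δ ≤ w xs := hwxs
    have hchain : c * (T xs - T (xs + h)) ≤ -P * (w xs) := by
      have : f (u xs) - f (u (xs + h)) ≤ L * (w xs) := by
        have : u xs - u (xs + h) = w xs := rfl
        rw [← this]
        exact happ
      rw [hPdef]
      nlinarith
    have hchain2 : c * (-((2*δ) * Cφ)) ≤ c * (T xs - T (xs + h)) :=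
      mul_le_mul_of_nonneg_left hTlow hcpos.le
    -- contradiction
    have hfinal : P * (S - δ) ≤ 2*δ*c*Cφ := by nlinarith
    have hδeq : δ * (2 * (P + 2 * c * Cφ)) = P * S := by
      rw [hδdef]
      field_simp
    nlinarith
  -- conclude u is constant
  have hconst : ∀ x : Pt N, u x = u 0 := by
    intro x
    have h1 : u 0 - u (0 + (x - 0)) ≤ 0 := key (x - 0) 0
    have h2 : u x - u (x + (0 - x)) ≤ 0 := key (0 - x) x
    have e1 : (0 : Pt N) + (x - 0) = x := by abel
    have e2 : x + ((0:Pt N) - x) = 0 := by abel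
    rw [e1] at h1
    rw [e2] at h2
    linarith
  refine ⟨u 0, hconst, ?_⟩
  have hAf0 : Af N s m u 0 = fun _ => (0:ℝ) := by
    funext ε
    rw [Af]
    have : ∀ z : Pt N, (u 0 - u (0 + z)) * ker N s m z = 0 := by
      intro z
      rw [hconst (0 + z)]
      ring
    simp only [this]
    exact integral_zero _ _
  have hT0 : T 0 = 0 := by
    rw [hTdef]
    simp only [hAf0]
    exact Filter.Tendsto.limUnder_eq tendsto_const_nhds
  have := heqT 0
  rw [hT0] at this
  linarith
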